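/- Let n be a positive integer, η > 0 a real number, Π : Matrix (Fin n) (Fin n) ℝ a diagonal matrix with strictly positive diagonal entries, L̂ : Matrix (Fin n) (Fin n) ℝ a symmetric matrix such that η•Π + L̂ is positive definite, Y : Matrix (Fin n) (Fin n) ℝ arbitrary, and F_v = η • (η•Π + L̂)⁻¹ * Π * Y. Define the horizontal objective G_h(F) = (η/2) * trace((F − F_v) * Π * (F − F_v)ᵀ) + (1/2) * trace(F * L̂ * Fᵀ). Then the matrix F = η² • (η•Π + L̂)⁻¹ * Π * Y * Π * (η•Π + L̂)⁻¹ is the unique minimizer of G_h, i.e., the combined result of vertical followed by horizontal constraint propagation. -/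

import Mathlib

open Matrix

/-- With `η > 0`, `Pmat` diagonal with positive diagonal, `L̂`
symmetric with `η•Pmat + L̂` positive definite, `Y` arbitrary, and
`F_v = η • (η•Pmat + L̂)⁻¹ * Pmat * Y` the vertical propagation result, the matrix
`F = η² • (η•Pmat + L̂)⁻¹ * Pmat * Y * Pmat * (η•Pmat + L̂)⁻¹` is the unique minimizer of
the horizontal objective
`G_h(F) = (η/2) trace((F − F_v) Pmat (F − F_v)ᵀ) + (1/2) trace(F L̂ Fᵀ)`. -/

lemma quad_trace_nonneg {n : ℕ} {A : Matrix (Fin n) (Fin n) ℝ} (hA : A.PosDef)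
    (E : Matrix (Fin n) (Fin n) ℝ) :
    0 ≤ (E * A * Eᵀ).trace ∧ ((E * A * Eᵀ).trace = 0 → E = 0) := by
  have hdiag : ∀ i, (E * A * Eᵀ) i i = E i ⬝ᵥ A *ᵥ E i := by
    intro i
    rw [dotProduct_mulVec]
    simp [Matrix.mul_apply, dotProduct, vecMul, Finset.sum_mul]
  have htr : (E * A * Eᵀ).trace = ∑ i, E i ⬝ᵥ A *ᵥ E i := by
    simp [Matrix.trace, Matrix.diag, hdiag]
  have hterm : ∀ i, 0 ≤ E i ⬝ᵥ A *ᵥ E i := fun i => by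
    have := hA.posSemidef.dotProduct_mulVec_nonneg (E i); simpa using this
  constructor
  · rw [htr]; exact Finset.sum_nonneg fun i _ => hterm i
  · intro h0
    rw [htr] at h0
    have hz := (Finset.sum_eq_zero_iff_of_nonneg (fun i _ => hterm i)).mp h0
    have hrow : ∀ i, E i = 0 := by
      intro i
      by_contra hEi
      have hp := hA.dotProduct_mulVec_pos hEi
      simp only [star_trivial] at hp
      have := hz i (Finset.mem_univ i)
      linarith
    ext i j
    rw [hrow i]; rfl


theorem mmcp_horizontal_propagation_unique_minimizer
    (n : ℕ) (hn : 0 < n) (η : ℝ) (hη : 0 < η)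
    (Pmat : Matrix (Fin n) (Fin n) ℝ)
    (hPmatdiag : Pmat.IsDiag) (hPmatpos : ∀ i, 0 < Pmat i i)
    (L : Matrix (Fin n) (Fin n) ℝ) (hLsymm : L.IsSymm)
    (hposdef : (η • Pmat + L).PosDef)
    (Y : Matrix (Fin n) (Fin n) ℝ)
    (Fv : Matrix (Fin n) (Fin n) ℝ)
    (hFv : Fv = η • ((η • Pmat + L)⁻¹ * Pmat * Y))
    (Gh : Matrix (Fin n) (Fin n) ℝ → ℝ)
    (hGh : ∀ F, Gh F = (η / 2) * ((F - Fv) * Pmat * (F - Fv)ᵀ).trace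
        + (1 / 2) * (F * L * Fᵀ).trace)
    (Fstar : Matrix (Fin n) (Fin n) ℝ)
    (hFstar : Fstar = (η ^ 2) • ((η • Pmat + L)⁻¹ * Pmat * Y * Pmat * (η • Pmat + L)⁻¹)) :
    (∀ F, Gh Fstar ≤ Gh F) ∧ (∀ F, Gh F = Gh Fstar → F = Fstar) := by
  set A := η • Pmat + L with hA
  have hPsym : Pmatᵀ = Pmat := hPmatdiag.isSymm
  have hAsymm : Aᵀ = A := by rw [hA, transpose_add, transpose_smul, hPsym, hLsymm]
  have hdet : IsUnit A.det := isUnit_iff_ne_zero.mpr (ne_of_gt hposdef.det_pos)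
  have hAinv : A * A⁻¹ = 1 := Matrix.mul_nonsing_inv A hdet
  have hinvsymm : (A⁻¹)ᵀ = A⁻¹ := by rw [Matrix.transpose_nonsing_inv, hAsymm]
  -- key stationarity identity
  have hkey : A * Fstarᵀ = η • (Pmat * Fvᵀ) := by
    rw [hFstar, hFv]
    simp only [transpose_smul, transpose_mul, hinvsymm, hPsym, Matrix.mul_smul, smul_smul]
    rw [show η * η = η ^ 2 by ring]
    congr 1
    rw [← Matrix.mul_assoc, ← Matrix.mul_assoc, ← Matrix.mul_assoc, ← Matrix.mul_assoc,
      hAinv, Matrix.one_mul]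
    simp [Matrix.mul_assoc]
  -- trace swap lemmas
  have swapP : ∀ X Z : Matrix (Fin n) (Fin n) ℝ,
      (X * Pmat * Zᵀ).trace = (Z * Pmat * Xᵀ).trace := by
    intro X Z
    rw [← Matrix.trace_transpose (X * Pmat * Zᵀ), transpose_mul, transpose_mul,
      transpose_transpose, hPsym, Matrix.mul_assoc]
  have swapL : ∀ X Z : Matrix (Fin n) (Fin n) ℝ,
      (X * L * Zᵀ).trace = (Z * L * Xᵀ).trace := by
    intro X Z
    rw [← Matrix.trace_transpose (X * L * Zᵀ), transpose_mul, transpose_mul,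
      transpose_transpose, hLsymm, Matrix.mul_assoc]
  -- decomposition
  have hGdiff : ∀ F, Gh F = Gh Fstar + (1/2) * ((F - Fstar) * A * (F - Fstar)ᵀ).trace := by
    intro F
    obtain ⟨E, rfl⟩ : ∃ E, F = Fstar + E := ⟨F - Fstar, by abel⟩
    have h1 : Fstar + E - Fv = (Fstar - Fv) + E := by abel
    have h2 : Fstar + E - Fstar = E := by abel
    rw [hGh, hGh, h1, h2]
    -- cross term vanishing
    have hcrossM : η • (Pmat * (Fstar - Fv)ᵀ) + L * Fstarᵀ = 0 := by
      rw [transpose_sub, Matrix.mul_sub, smul_sub]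
      have : η • (Pmat * Fstarᵀ) + L * Fstarᵀ = A * Fstarᵀ := by
        rw [hA, add_mul, smul_mul_assoc]
      rw [sub_add_eq_add_sub, this, hkey, sub_self]
    have hcross : η * ((E * (Pmat * (Fstar - Fv)ᵀ)).trace)
        + (E * (L * Fstarᵀ)).trace = 0 := by
      have := congrArg (fun M => (E * M).trace) hcrossM
      simpa [Matrix.mul_add, mul_smul_comm, Matrix.trace_add, Matrix.trace_smul,
        smul_eq_mul] using this
    simp only [transpose_add, Matrix.add_mul, Matrix.mul_add, Matrix.trace_add, hA,
      smul_mul_assoc, mul_smul_comm, Matrix.trace_smul, smul_eq_mul]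
    rw [swapP (Fstar - Fv) E, swapL Fstar E,
      Matrix.mul_assoc E Pmat (Fstar - Fv)ᵀ, Matrix.mul_assoc E L Fstarᵀ]
    linear_combination hcross
  constructor
  · intro F
    have := (quad_trace_nonneg hposdef (F - Fstar)).1
    rw [hGdiff F]; linarith
  · intro F hF
    have h := hGdiff F
    rw [hF] at h
    have h0 : ((F - Fstar) * A * (F - Fstar)ᵀ).trace = 0 := by linarith
    have := (quad_trace_nonneg hposdef (F - Fstar)).2 h0
    exact sub_eq_zero.mp this
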